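/- Let n ≥ 1 and let V := ℝ^{n+2} × (ℝ^{n+2})* with B((x,ξ),(y,η)) := ξ(y) + η(x), standard basis (e₀,…,e_{n+1}) of ℝ^{n+2} and dual basis (e⁰,…,e^{n+1}). Let X, Y ∈ ℝⁿ and z ∈ ℝ with (X, Y, z) ≠ 0, and set u₁ := (Σᵢ Xⁱ e_i + z e_{n+1}, 0), u₂ := (0, Σⱼ Y_j e^j − z e⁰) (indices i, j running from 1 to n), and W := span{u₁, u₂, (e₀, 0), (0, e^{n+1})} ⊆ V. Write a := Σᵢ Xⁱ Y_i. Then: (a) dim W = 3 and B vanishes identically on W if and only if z = 0 and exactly one of X, Y is zero; (b) dim W = 4 and B vanishes identically on W if and only if z = 0, X ≠ 0, Y ≠ 0 and a = 0; (c) dim W = 4 and the restriction of B to W has rank 2 if and only if z = 0 and a ≠ 0; (d) the restriction of B to W is nondegenerate (and then dim W = 4) if and only if z ≠ 0. -/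

import Mathlib

/-- The para-Hermitian inner product B((x,ξ),(y,η)) = ξ(y) + η(x) on
V = ℝ^m × (ℝ^m)*, as a bilinear form. -/
noncomputable def Bbil (m : ℕ) :
    ((Fin m → ℝ) × Module.Dual ℝ (Fin m → ℝ)) →ₗ[ℝ]
      ((Fin m → ℝ) × Module.Dual ℝ (Fin m → ℝ)) →ₗ[ℝ] ℝ :=
  LinearMap.mk₂ ℝ (fun v w => v.2 w.1 + w.2 v.1)
    (fun v v' w => by
      simp only [Prod.fst_add, Prod.snd_add, LinearMap.add_apply, map_add]; ring)
    (fun c v w => by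
      simp only [Prod.smul_fst, Prod.smul_snd, LinearMap.smul_apply, map_smul,
        smul_eq_mul]; ring)
    (fun v w w' => by
      simp only [Prod.fst_add, Prod.snd_add, LinearMap.add_apply, map_add]; ring)
    (fun c v w => by
      simp only [Prod.smul_fst, Prod.smul_snd, LinearMap.smul_apply, map_smul,
        smul_eq_mul]; ring)

/-- The coordinate functional e^i on ℝ^m. -/
noncomputable def prj (m : ℕ) (i : Fin m) : Module.Dual ℝ (Fin m → ℝ) :=
  LinearMap.proj i

theorem range4' {M : Type*} (x y z w : M) :
    Set.range ![x,y,z,w] = {x,y,z,w} := by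
  ext v
  constructor
  · rintro ⟨i, rfl⟩; fin_cases i <;> simp
  · rintro (rfl|rfl|rfl|rfl)
    exacts [⟨0, rfl⟩, ⟨1, rfl⟩, ⟨2, rfl⟩, ⟨3, rfl⟩]

theorem range3' {M : Type*} (x y z : M) :
    Set.range ![x,y,z] = {x,y,z} := by
  ext v
  constructor
  · rintro ⟨i, rfl⟩; fin_cases i <;> simp
  · rintro (rfl|rfl|rfl)
    exacts [⟨0, rfl⟩, ⟨1, rfl⟩, ⟨2, rfl⟩]

theorem range2' {M : Type*} (x y : M) :
    Set.range ![x,y] = {x,y} := by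
  ext v
  constructor
  · rintro ⟨i, rfl⟩; fin_cases i <;> simp
  · rintro (rfl|rfl)
    exacts [⟨0, rfl⟩, ⟨1, rfl⟩]

theorem li_aux {k : ℕ} {M : Type*} [AddCommGroup M] [Module ℝ M]
    (f : Fin k → M) (ψ : Fin k → M →ₗ[ℝ] ℝ) (d : Fin k → ℝ) (hd : ∀ i, d i ≠ 0)
    (h : ∀ i j, ψ i (f j) = if i = j then d i else 0) : LinearIndependent ℝ f := by
  rw [Fintype.linearIndependent_iff]
  intro g hg i
  have h2 := congrArg (ψ i) hg
  rw [map_sum, map_zero] at h2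
  simp only [map_smul, smul_eq_mul, h, mul_ite, mul_zero] at h2
  rw [Finset.sum_ite_eq (Finset.univ) i (fun j => g j * d i)] at h2
  simp only [Finset.mem_univ, if_true] at h2
  exact (mul_eq_zero.mp h2).resolve_right (hd i)

theorem expand2 {M : Type*} [AddCommGroup M] [Module ℝ M] (B : M →ₗ[ℝ] M →ₗ[ℝ] ℝ)
    {k : ℕ} (f : Fin k → M) (c d : Fin k → ℝ) :
    B (∑ i, c i • f i) (∑ j, d j • f j) = ∑ i, ∑ j, c i * (d j * B (f i) (f j)) := by
  simp only [map_sum, map_smul, LinearMap.sum_apply, LinearMap.smul_apply, smul_eq_mul,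
    Finset.mul_sum]
  rw [Finset.sum_comm]
  exact Finset.sum_congr rfl fun i _ => Finset.sum_congr rfl fun j _ => by ring

theorem expandrow {M : Type*} [AddCommGroup M] [Module ℝ M] (B : M →ₗ[ℝ] M →ₗ[ℝ] ℝ)
    {k : ℕ} (f : Fin k → M) (c : Fin k → ℝ) (j₀ : Fin k) :
    B (∑ i, c i • f i) (f j₀) = ∑ i, c i * B (f i) (f j₀) := by
  rw [map_sum]
  simp [LinearMap.sum_apply]

theorem expandcol {M : Type*} [AddCommGroup M] [Module ℝ M] (B : M →ₗ[ℝ] M →ₗ[ℝ] ℝ)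
    {k : ℕ} (f : Fin k → M) (d : Fin k → ℝ) (i₀ : Fin k) :
    B (f i₀) (∑ j, d j • f j) = ∑ j, d j * B (f i₀) (f j) := by
  simp

set_option maxHeartbeats 2000000 in
/-- classification of the subspace W = ⟨u₁, u₂, (e₀,0), (0,e^{n+1})⟩
attached to a tangent vector (X, Y, z) of the model Lagrangian contact structure. -/
theorem stmt_6 (n : ℕ) (hn : 1 ≤ n)
    (X Y : Fin n → ℝ) (z : ℝ) (hXYz : ¬(X = 0 ∧ Y = 0 ∧ z = 0))
    (u₁ u₂ : (Fin (n+2) → ℝ) × Module.Dual ℝ (Fin (n+2) → ℝ))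
    (hu₁ : u₁ = (((∑ i : Fin n, X i • (Pi.single (i.succ.castSucc) (1:ℝ) : Fin (n+2) → ℝ))
        + z • (Pi.single (Fin.last (n+1)) (1:ℝ) : Fin (n+2) → ℝ) : Fin (n+2) → ℝ), 0))
    (hu₂ : u₂ = (0, (∑ j : Fin n, Y j • prj (n+2) (j.succ.castSucc))
        - z • prj (n+2) 0))
    (W : Submodule ℝ ((Fin (n+2) → ℝ) × Module.Dual ℝ (Fin (n+2) → ℝ)))
    (hW : W = Submodule.span ℝ
        {u₁, u₂, ((Pi.single (0 : Fin (n+2)) (1:ℝ) : Fin (n+2) → ℝ), 0), (0, prj (n+2) (Fin.last (n+1)))})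
    (a : ℝ) (ha : a = ∑ i : Fin n, X i * Y i) :
    ((Module.finrank ℝ W = 3 ∧ (∀ v ∈ W, ∀ w ∈ W, Bbil (n+2) v w = 0))
        ↔ (z = 0 ∧ ((X = 0 ∧ Y ≠ 0) ∨ (X ≠ 0 ∧ Y = 0)))) ∧
    ((Module.finrank ℝ W = 4 ∧ (∀ v ∈ W, ∀ w ∈ W, Bbil (n+2) v w = 0))
        ↔ (z = 0 ∧ X ≠ 0 ∧ Y ≠ 0 ∧ a = 0)) ∧
    ((Module.finrank ℝ W = 4 ∧
        Module.finrank ℝ (LinearMap.range (LinearMap.domRestrict₁₂ (Bbil (n+2)) W W)) = 2)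
        ↔ (z = 0 ∧ a ≠ 0)) ∧
    ((LinearMap.BilinForm.Nondegenerate (LinearMap.domRestrict₁₂ (Bbil (n+2)) W W)
        ↔ z ≠ 0) ∧
      (LinearMap.BilinForm.Nondegenerate (LinearMap.domRestrict₁₂ (Bbil (n+2)) W W)
        → Module.finrank ℝ W = 4)) := by
  classical
  set g₃ : (Fin (n+2) → ℝ) × Module.Dual ℝ (Fin (n+2) → ℝ) :=
    ((Pi.single (0 : Fin (n+2)) (1:ℝ) : Fin (n+2) → ℝ), 0) with hg₃
  set g₄ : (Fin (n+2) → ℝ) × Module.Dual ℝ (Fin (n+2) → ℝ) :=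
    ((0 : Fin (n+2) → ℝ), prj (n+2) (Fin.last (n+1))) with hg₄
  set f : Fin 4 → ((Fin (n+2) → ℝ) × Module.Dual ℝ (Fin (n+2) → ℝ)) := ![u₁, u₂, g₃, g₄] with hf
  set BW := LinearMap.domRestrict₁₂ (Bbil (n+2)) W W with hBWdef
  -- basic component facts
  have hu₁2 : u₁.2 = 0 := by rw [hu₁]
  have hu₂1 : u₂.1 = 0 := by rw [hu₂]
  have hB : ∀ p q : (Fin (n+2) → ℝ) × Module.Dual ℝ (Fin (n+2) → ℝ),
      Bbil (n+2) p q = p.2 q.1 + q.2 p.1 := fun _ _ => rfl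
  -- Fin facts
  have hne1 : ∀ i : Fin n, (i.succ.castSucc : Fin (n+2)) ≠ Fin.last (n+1) :=
    fun i => Fin.ne_of_lt (Fin.castSucc_lt_last _)
  have hne2 : ∀ i : Fin n, ((0 : Fin (n+2))) ≠ (i.succ.castSucc : Fin (n+2)) := by
    intro i h
    exact (Fin.succ_ne_zero i) (Fin.castSucc_injective _ (by simpa using h.symm))
  have hne3 : (0 : Fin (n+2)) ≠ Fin.last (n+1) := by simp [Fin.ext_iff]
  have hinj : ∀ i j : Fin n, ((j.succ.castSucc : Fin (n+2)) = i.succ.castSucc) ↔ j = i := by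
    intro i j
    constructor
    · intro h; exact Fin.succ_injective _ (Fin.castSucc_injective _ h)
    · rintro rfl; rfl
  -- coordinates of u₁.1
  have hu₁last : u₁.1 (Fin.last (n+1)) = z := by
    rw [hu₁]
    simp [Finset.sum_apply, Pi.single_apply, fun i : Fin n => (hne1 i).symm]
  have hu₁0 : u₁.1 0 = 0 := by
    rw [hu₁]
    simp [Finset.sum_apply, Pi.single_apply, hne2, hne3]
  have hu₁j : ∀ j : Fin n, u₁.1 (j.succ.castSucc) = X j := by
    intro j
    rw [hu₁]
    simp [Finset.sum_apply, Pi.single_apply, hinj, hne1 j]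
  -- u₂.2 as a function
  have hu₂app : ∀ v : Fin (n+2) → ℝ,
      u₂.2 v = (∑ j : Fin n, Y j * v (j.succ.castSucc)) - z * v 0 := by
    rw [hu₂]
    intro v
    simp [prj, LinearMap.sum_apply]
  -- coordinates of Pi.single vectors
  have hs00 : (Pi.single (0 : Fin (n+2)) (1:ℝ) : Fin (n+2) → ℝ) 0 = 1 := by simp
  have hs0last : (Pi.single (0 : Fin (n+2)) (1:ℝ) : Fin (n+2) → ℝ) (Fin.last (n+1)) = 0 := by
    simp [Pi.single_apply, hne3.symm]
  have hs0j : ∀ j : Fin n, (Pi.single (0 : Fin (n+2)) (1:ℝ) : Fin (n+2) → ℝ) (j.succ.castSucc) = 0 := by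
    intro j; simp [Pi.single_apply, (hne2 j).symm]
  have hsl0 : (Pi.single (Fin.last (n+1) : Fin (n+2)) (1:ℝ) : Fin (n+2) → ℝ) 0 = 0 := by
    simp [Pi.single_apply, hne3]
  have hsllast : (Pi.single (Fin.last (n+1) : Fin (n+2)) (1:ℝ) : Fin (n+2) → ℝ) (Fin.last (n+1)) = 1 := by simp
  have hslj : ∀ j : Fin n, (Pi.single (Fin.last (n+1) : Fin (n+2)) (1:ℝ) : Fin (n+2) → ℝ) (j.succ.castSucc) = 0 := by
    intro j; simp [Pi.single_apply, hne1 j]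
  have hsk0 : ∀ k : Fin n, (Pi.single (k.succ.castSucc : Fin (n+2)) (1:ℝ) : Fin (n+2) → ℝ) 0 = 0 := by
    intro k; simp [Pi.single_apply, hne2 k]
  have hsklast : ∀ k : Fin n, (Pi.single (k.succ.castSucc : Fin (n+2)) (1:ℝ) : Fin (n+2) → ℝ) (Fin.last (n+1)) = 0 := by
    intro k; simp [Pi.single_apply, (hne1 k).symm]
  have hskj : ∀ k j : Fin n,
      (Pi.single (k.succ.castSucc : Fin (n+2)) (1:ℝ) : Fin (n+2) → ℝ) (j.succ.castSucc) = if j = k then 1 else 0 := by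
    intro k j; simp [Pi.single_apply, hinj]
  -- evaluations of u₂.2
  have hu₂s0 : u₂.2 (Pi.single (0 : Fin (n+2)) (1:ℝ) : Fin (n+2) → ℝ) = -z := by
    rw [hu₂app]; simp [hs0j, hs00]
  have hu₂slast : u₂.2 (Pi.single (Fin.last (n+1) : Fin (n+2)) (1:ℝ) : Fin (n+2) → ℝ) = 0 := by
    rw [hu₂app]; simp [hslj, hsl0]
  have hu₂sk : ∀ k : Fin n, u₂.2 (Pi.single (k.succ.castSucc : Fin (n+2)) (1:ℝ) : Fin (n+2) → ℝ) = Y k := by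
    intro k
    rw [hu₂app]
    simp [-Fin.castSucc_succ, hskj, hsk0, mul_ite, Finset.sum_ite_eq]
  have hu₂u₁ : u₂.2 u₁.1 = a := by
    rw [hu₂app, ha]
    simp [-Fin.castSucc_succ, hu₁j, hu₁0, mul_comm]
  -- the Gram matrix
  have hG : ∀ i j : Fin 4, Bbil (n+2) (f i) (f j)
      = (!![0,a,0,z; a,0,-z,0; 0,-z,0,0; z,0,0,0] : Matrix (Fin 4) (Fin 4) ℝ) i j := by
    intro i j
    fin_cases i <;> fin_cases j <;>
      simp [hf, hB, hg₃, hg₄, prj, hu₁2, hu₂1, hu₂u₁, hu₂s0, hu₂slast, hu₁last, hu₁0, hs0last, Matrix.vecHead, Matrix.vecTail]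
  -- membership facts
  have hfW : ∀ i : Fin 4, f i ∈ W := by
    intro i
    rw [hW]
    apply Submodule.subset_span
    fin_cases i <;> simp [hf]
  have hWr : W = Submodule.span ℝ (Set.range f) := by
    rw [hW, hf, range4']
  have hmem : ∀ v, v ∈ W ↔ ∃ c : Fin 4 → ℝ, ∑ i : Fin 4, c i • f i = v := by
    intro v
    rw [hWr]
    exact Submodule.mem_span_range_iff_exists_fun ℝ
  haveI hfin : FiniteDimensional ℝ W := by
    rw [hWr]; exact FiniteDimensional.span_of_finite ℝ (Set.finite_range f)
  -- dimension lemmas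
  have simpset := 0
  have hdimz : z ≠ 0 → Module.finrank ℝ W = 4 := by
    intro hz
    have hli : LinearIndependent ℝ f := by
      refine li_aux f
        ![(LinearMap.proj (Fin.last (n+1))).comp (LinearMap.fst ℝ _ _),
          (LinearMap.applyₗ (Pi.single (0:Fin (n+2)) (1:ℝ) : Fin (n+2) → ℝ)).comp (LinearMap.snd ℝ _ _),
          (LinearMap.proj (0 : Fin (n+2))).comp (LinearMap.fst ℝ _ _),
          (LinearMap.applyₗ (Pi.single (Fin.last (n+1)) (1:ℝ) : Fin (n+2) → ℝ)).comp (LinearMap.snd ℝ _ _)]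
        ![z, -z, 1, 1] ?_ ?_
      · intro i; fin_cases i <;> simp [hz]
      · intro i j
        fin_cases i <;> fin_cases j <;>
          simp [hf, hg₃, hg₄, prj, hu₁2, hu₂1, hu₁last, hu₁0, hu₂s0, hu₂slast,
            hs0last, hs00, hsl0, hsllast, Matrix.vecHead, Matrix.vecTail]
    rw [hWr, finrank_span_eq_card hli]
    simp
  have hdimXY : X ≠ 0 → Y ≠ 0 → Module.finrank ℝ W = 4 := by
    intro hX hY
    obtain ⟨i₀, hi₀⟩ := Function.ne_iff.mp hX
    obtain ⟨j₀, hj₀⟩ := Function.ne_iff.mp hY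
    simp only [Pi.zero_apply] at hi₀ hj₀
    have hli : LinearIndependent ℝ f := by
      refine li_aux f
        ![(LinearMap.proj (i₀.succ.castSucc : Fin (n+2))).comp (LinearMap.fst ℝ _ _),
          (LinearMap.applyₗ (Pi.single (j₀.succ.castSucc : Fin (n+2)) (1:ℝ) : Fin (n+2) → ℝ)).comp (LinearMap.snd ℝ _ _),
          (LinearMap.proj (0 : Fin (n+2))).comp (LinearMap.fst ℝ _ _),
          (LinearMap.applyₗ (Pi.single (Fin.last (n+1)) (1:ℝ) : Fin (n+2) → ℝ)).comp (LinearMap.snd ℝ _ _)]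
        ![X i₀, Y j₀, 1, 1] ?_ ?_
      · intro i; fin_cases i <;> simp [hi₀, hj₀]
      · intro i j
        fin_cases i <;> fin_cases j <;>
          simp [-Fin.castSucc_succ, hf, hg₃, hg₄, prj, hu₁2, hu₂1, hu₁j, hu₁0, hu₂sk, hu₂slast,
            hs0j, hs00, hsk0, hsklast, hsl0, hsllast, Matrix.vecHead, Matrix.vecTail]
    rw [hWr, finrank_span_eq_card hli]
    simp
  have hdim3Y : z = 0 → Y = 0 → Module.finrank ℝ W = 3 := by
    intro hz hY
    have hX : X ≠ 0 := fun h => hXYz ⟨h, hY, hz⟩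
    obtain ⟨i₀, hi₀⟩ := Function.ne_iff.mp hX
    simp only [Pi.zero_apply] at hi₀
    have hu₂0 : u₂ = 0 := by
      rw [hu₂]; simp [hz, hY]
    have hW3 : W = Submodule.span ℝ (Set.range ![u₁, g₃, g₄]) := by
      rw [hW, hu₂0, range3', Set.insert_comm]
      exact Submodule.span_insert_zero
    have hli : LinearIndependent ℝ ![u₁, g₃, g₄] := by
      refine li_aux _
        ![(LinearMap.proj (i₀.succ.castSucc : Fin (n+2))).comp (LinearMap.fst ℝ _ _),
          (LinearMap.proj (0 : Fin (n+2))).comp (LinearMap.fst ℝ _ _),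
          (LinearMap.applyₗ (Pi.single (Fin.last (n+1)) (1:ℝ) : Fin (n+2) → ℝ)).comp (LinearMap.snd ℝ _ _)]
        ![X i₀, 1, 1] ?_ ?_
      · intro i; fin_cases i <;> simp [hi₀]
      · intro i j
        fin_cases i <;> fin_cases j <;>
          simp [-Fin.castSucc_succ, hg₃, hg₄, prj, hu₁2, hu₁j, hu₁0, hs0j, hs00, hsl0, hsllast,
            Matrix.vecHead, Matrix.vecTail]
    rw [hW3, finrank_span_eq_card hli]
    simp
  have hdim3X : z = 0 → X = 0 → Module.finrank ℝ W = 3 := by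
    intro hz hX
    have hY : Y ≠ 0 := fun h => hXYz ⟨hX, h, hz⟩
    obtain ⟨j₀, hj₀⟩ := Function.ne_iff.mp hY
    simp only [Pi.zero_apply] at hj₀
    have hu₁0' : u₁ = 0 := by
      rw [hu₁]; simp [hz, hX]
    have hW3 : W = Submodule.span ℝ (Set.range ![u₂, g₃, g₄]) := by
      rw [hW, hu₁0', range3']
      exact Submodule.span_insert_zero
    have hli : LinearIndependent ℝ ![u₂, g₃, g₄] := by
      refine li_aux _
        ![(LinearMap.applyₗ (Pi.single (j₀.succ.castSucc : Fin (n+2)) (1:ℝ) : Fin (n+2) → ℝ)).comp (LinearMap.snd ℝ _ _),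
          (LinearMap.proj (0 : Fin (n+2))).comp (LinearMap.fst ℝ _ _),
          (LinearMap.applyₗ (Pi.single (Fin.last (n+1)) (1:ℝ) : Fin (n+2) → ℝ)).comp (LinearMap.snd ℝ _ _)]
        ![Y j₀, 1, 1] ?_ ?_
      · intro i; fin_cases i <;> simp [hj₀]
      · intro i j
        fin_cases i <;> fin_cases j <;>
          simp [-Fin.castSucc_succ, hg₃, hg₄, prj, hu₂1, hu₂sk, hu₂slast, hs0j, hs00, hsk0, hsklast,
            hsl0, hsllast, Matrix.vecHead, Matrix.vecTail]
    rw [hW3, finrank_span_eq_card hli]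
    simp
  -- vanishing lemmas
  have hvanish : z = 0 → a = 0 → ∀ v ∈ W, ∀ w ∈ W, Bbil (n+2) v w = 0 := by
    intro hz ha0 v hv w hw
    obtain ⟨c, rfl⟩ := (hmem v).mp hv
    obtain ⟨d, rfl⟩ := (hmem w).mp hw
    rw [expand2]
    refine Finset.sum_eq_zero fun i _ => Finset.sum_eq_zero fun j _ => ?_
    rw [hG]
    fin_cases i <;> fin_cases j <;> simp [hz, ha0, Matrix.vecHead, Matrix.vecTail]
  have hBza : (∀ v ∈ W, ∀ w ∈ W, Bbil (n+2) v w = 0) → z = 0 ∧ a = 0 := by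
    intro h
    constructor
    · have h1 := h (f 0) (hfW 0) (f 3) (hfW 3)
      rw [hG] at h1
      simpa using h1
    · have h2 := h (f 0) (hfW 0) (f 1) (hfW 1)
      rw [hG] at h2
      simpa using h2
  -- nondegeneracy when z ≠ 0
  have hBWrefl : LinearMap.IsRefl BW := fun x y h => by
    rw [hBWdef, LinearMap.domRestrict₁₂_apply] at h ⊢
    simp only [hB] at h ⊢
    linarith
  have hnd : z ≠ 0 → LinearMap.BilinForm.Nondegenerate BW := by
    intro hz
    refine (fun hL => ⟨hL, fun y hy => hL y (fun x => hBWrefl _ _ (hy x))⟩) ?_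
    intro m hm
    obtain ⟨c, hc⟩ := (hmem ↑m).mp m.2
    have key : ∀ j₀ : Fin 4, (∑ i : Fin 4, c i * Bbil (n+2) (f i) (f j₀)) = 0 := by
      intro j₀
      rw [← expandrow, hc]
      have h := hm ⟨f j₀, hfW j₀⟩
      rwa [hBWdef, LinearMap.domRestrict₁₂_apply] at h
    have e0 := key 0
    have e1 := key 1
    have e2 := key 2
    have e3 := key 3
    simp only [hG, Fin.sum_univ_four] at e0 e1 e2 e3
    norm_num [Matrix.vecHead, Matrix.vecTail, Matrix.cons_val_two, Matrix.cons_val_three] at e0 e1 e2 e3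
    have hc0 : c 0 = 0 := e3.resolve_right hz
    have hc1 : c 1 = 0 := e2.resolve_right hz
    have hc2 : c 2 = 0 := by
      rw [hc0] at e1
      have h' : c 2 * z = 0 := by linarith
      exact (mul_eq_zero.mp h').resolve_right hz
    have hc3 : c 3 = 0 := by
      rw [hc1] at e0
      have h' : c 3 * z = 0 := by linarith
      exact (mul_eq_zero.mp h').resolve_right hz
    have hm0 : (↑m : (Fin (n+2) → ℝ) × Module.Dual ℝ (Fin (n+2) → ℝ)) = 0 := by
      rw [← hc, Fin.sum_univ_four, hc0, hc1, hc2, hc3]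
      simp
    exact ZeroMemClass.coe_eq_zero.mp hm0
  -- degeneracy when z = 0
  have hdeg : z = 0 → ¬ LinearMap.BilinForm.Nondegenerate BW := by
    intro hz hN
    have hm : (⟨f 2, hfW 2⟩ : W) = 0 := by
      apply hN.1
      intro y
      obtain ⟨d, hd⟩ := (hmem ↑y).mp y.2
      rw [hBWdef, LinearMap.domRestrict₁₂_apply]
      show Bbil (n+2) (f 2) ↑y = 0
      rw [← hd, expandcol]
      simp only [hG, Fin.sum_univ_four]
      norm_num [Matrix.vecHead, Matrix.vecTail, hz, Matrix.cons_val_two, Matrix.cons_val_three]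
    have hcoe : f 2 = 0 := congrArg Subtype.val hm
    rw [hf] at hcoe
    have h2 := congrFun (congrArg Prod.fst hcoe) 0
    simp [hg₃] at h2
  -- rank lemmas
  have hrank4 : z ≠ 0 → Module.finrank ℝ (LinearMap.range BW) = 4 := by
    intro hz
    have hker : LinearMap.ker BW = ⊥ := by
      rw [LinearMap.ker_eq_bot']
      intro m hm0
      exact (hnd hz).1 m (fun y => by rw [hm0]; rfl)
    have hh := LinearMap.finrank_range_add_finrank_ker (K := ℝ) (V := ↥W) (V₂ := ↥W →ₗ[ℝ] ℝ) BW
    rw [hker, finrank_bot ℝ ↥W, hdimz hz] at hh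
    omega
  have hrank0 : z = 0 → a = 0 → Module.finrank ℝ (LinearMap.range BW) = 0 := by
    intro hz ha0
    have hBW0 : BW = 0 := by
      refine LinearMap.ext fun m => LinearMap.ext fun y => ?_
      rw [hBWdef, LinearMap.domRestrict₁₂_apply]
      simpa using hvanish hz ha0 ↑m m.2 ↑y y.2
    rw [hBW0, LinearMap.range_zero, finrank_bot]
  have hrank2 : z = 0 → a ≠ 0 → Module.finrank ℝ (LinearMap.range BW) = 2 := by
    intro hz ha0
    set m₁ : W := ⟨f 0, hfW 0⟩ with hm₁
    set m₂ : W := ⟨f 1, hfW 1⟩ with hm₂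
    set φ₁ := BW m₁ with hφ₁
    set φ₂ := BW m₂ with hφ₂
    have hφy : ∀ (i₀ : Fin 4) (y : W) (d : Fin 4 → ℝ), (∑ j : Fin 4, d j • f j) = ↑y →
        Bbil (n+2) (f i₀) ↑y = ∑ j : Fin 4, d j * Bbil (n+2) (f i₀) (f j) := by
      intro i₀ y d hd
      rw [← hd, expandcol]
    have happ : ∀ (m : W) (c : Fin 4 → ℝ), (∑ i : Fin 4, c i • f i) = ↑m →
        BW m = c 0 • φ₁ + c 1 • φ₂ := by
      intro m c hc
      refine LinearMap.ext fun y => ?_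
      obtain ⟨d, hd⟩ := (hmem ↑y).mp y.2
      have hL : BW m y = c 0 * (d 1 * a) + c 1 * (d 0 * a) := by
        rw [hBWdef, LinearMap.domRestrict₁₂_apply, ← hc, ← hd, expand2]
        simp only [hG, Fin.sum_univ_four]
        norm_num [Matrix.vecHead, Matrix.vecTail, hz, Matrix.cons_val_two, Matrix.cons_val_three]
        try ring
      have h1 : φ₁ y = d 1 * a := by
        rw [hφ₁, hBWdef, LinearMap.domRestrict₁₂_apply]
        show Bbil (n+2) (f 0) ↑y = d 1 * a
        rw [hφy 0 y d hd]
        simp only [hG, Fin.sum_univ_four]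
        norm_num [Matrix.vecHead, Matrix.vecTail, hz, Matrix.cons_val_two, Matrix.cons_val_three]
      have h2 : φ₂ y = d 0 * a := by
        rw [hφ₂, hBWdef, LinearMap.domRestrict₁₂_apply]
        show Bbil (n+2) (f 1) ↑y = d 0 * a
        rw [hφy 1 y d hd]
        simp only [hG, Fin.sum_univ_four]
        norm_num [Matrix.vecHead, Matrix.vecTail, hz, Matrix.cons_val_two, Matrix.cons_val_three]
      simp [LinearMap.add_apply, LinearMap.smul_apply, smul_eq_mul, h1, h2, hL]
    have hr : LinearMap.range BW = Submodule.span ℝ (Set.range ![φ₁, φ₂]) := by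
      rw [range2']
      apply le_antisymm
      · rintro ψ ⟨m, rfl⟩
        obtain ⟨c, hc⟩ := (hmem ↑m).mp m.2
        rw [happ m c hc]
        exact Submodule.add_mem _
          (Submodule.smul_mem _ _ (Submodule.subset_span (by simp)))
          (Submodule.smul_mem _ _ (Submodule.subset_span (by simp)))
      · rw [Submodule.span_le]
        rintro ψ hψ
        simp only [Set.mem_insert_iff, Set.mem_singleton_iff] at hψ
        rcases hψ with rfl | rfl
        · exact ⟨m₁, rfl⟩
        · exact ⟨m₂, rfl⟩
    have hsing : ∀ j₀ : Fin 4, (∑ j : Fin 4, (Pi.single j₀ (1:ℝ) : Fin 4 → ℝ) j • f j) = f j₀ := by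
      intro j₀
      fin_cases j₀ <;> simp [Fin.sum_univ_four, Pi.single_apply]
    have hGval : ∀ i₀ j₀ : Fin 4, BW ⟨f i₀, hfW i₀⟩ ⟨f j₀, hfW j₀⟩
        = (!![0,a,0,z; a,0,-z,0; 0,-z,0,0; z,0,0,0] : Matrix (Fin 4) (Fin 4) ℝ) i₀ j₀ := by
      intro i₀ j₀
      rw [hBWdef, LinearMap.domRestrict₁₂_apply]
      exact hG i₀ j₀
    have h00 := hGval 0 0
    have h01 := hGval 0 1
    have h10 := hGval 1 0
    have h11 := hGval 1 1
    norm_num [Matrix.vecHead, Matrix.vecTail] at h00 h01 h10 h11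
    have hli : LinearIndependent ℝ ![φ₁, φ₂] := by
      refine li_aux _ ![LinearMap.applyₗ m₂, LinearMap.applyₗ m₁] ![a, a] ?_ ?_
      · intro i; fin_cases i <;> simpa using ha0
      · intro i j
        fin_cases i <;> fin_cases j <;>
          simp [hφ₁, hφ₂, hm₁, hm₂, h00, h01, h10, h11, Matrix.vecHead, Matrix.vecTail]
    rw [hr, finrank_span_eq_card hli]
    simp
  -- final assembly
  refine ⟨?_, ?_, ?_, ?_⟩
  · constructor
    · rintro ⟨h3, h0⟩
      obtain ⟨hz, ha0⟩ := hBza h0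
      refine ⟨hz, ?_⟩
      rcases eq_or_ne X 0 with hX | hX
      · exact Or.inl ⟨hX, fun hY => hXYz ⟨hX, hY, hz⟩⟩
      · refine Or.inr ⟨hX, ?_⟩
        by_contra hY
        rw [hdimXY hX hY] at h3
        omega
    · rintro ⟨hz, hXY⟩
      rcases hXY with ⟨hX, hY⟩ | ⟨hX, hY⟩
      · have ha0 : a = 0 := by rw [ha]; simp [hX]
        exact ⟨hdim3X hz hX, hvanish hz ha0⟩
      · have ha0 : a = 0 := by rw [ha]; simp [hY]
        exact ⟨hdim3Y hz hY, hvanish hz ha0⟩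
  · constructor
    · rintro ⟨h4, h0⟩
      obtain ⟨hz, ha0⟩ := hBza h0
      have hX : X ≠ 0 := by
        intro hX
        rw [hdim3X hz hX] at h4
        omega
      have hY : Y ≠ 0 := by
        intro hY
        rw [hdim3Y hz hY] at h4
        omega
      exact ⟨hz, hX, hY, ha0⟩
    · rintro ⟨hz, hX, hY, ha0⟩
      exact ⟨hdimXY hX hY, hvanish hz ha0⟩
  · constructor
    · rintro ⟨h4, hr2⟩
      have hz : z = 0 := by
        by_contra hz
        rw [hrank4 hz] at hr2
        omega
      refine ⟨hz, fun ha0 => ?_⟩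
      rw [hrank0 hz ha0] at hr2
      omega
    · rintro ⟨hz, ha0⟩
      have hX : X ≠ 0 := by
        rintro rfl
        apply ha0
        rw [ha]
        simp
      have hY : Y ≠ 0 := by
        rintro rfl
        apply ha0
        rw [ha]
        simp
      exact ⟨hdimXY hX hY, hrank2 hz ha0⟩
  · refine ⟨⟨fun hN => ?_, hnd⟩, fun hN => ?_⟩
    · intro hz
      exact hdeg hz hN
    · have hz : z ≠ 0 := by
        intro hz
        exact hdeg hz hN
      exact hdimz hz
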